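/- Let G be a finite simple directed graph without self-loops on vertex set [m] = {1,…,m}, and let F_1,…,F_m be finite simple directed graphs without self-loops on nonempty finite vertex sets such that β(F_1) ≤ β(F_2) ≤ ⋯ ≤ β(F_m). Then the broadcast rate of the generalized lexicographic product satisfies β(G ∘ (F_1,…,F_m)) ≤ β(F_1)·β(G) + Σ_{i=1}^{m−1} (β(F_{i+1}) − β(F_i)) · β(G|_{{i+1,…,m}}), where G|_{{i+1,…,m}} denotes the subgraph of G induced by the vertices {i+1,…,m}. -/

import Mathlib

namespace IC

/-- A `(t, r)` index code (with per-message lengths `t j` bits and index length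
`r` bits) exists for the directed graph with edge relation `E` on vertex set `V`:
there are an encoder `φ` and, for each node `j`, a decoder `ψ j` that recovers
message `x j` from the index `φ x` and the side information `(x i)_{i ∈ A_j}`. -/
def HasCode {V : Type*} (E : V → V → Prop) (t : V → ℕ) (r : ℕ) : Prop :=
  ∃ (φ : (∀ j : V, Fin (t j) → Fin 2) → (Fin r → Fin 2))
    (ψ : ∀ j : V, (Fin r → Fin 2) → (∀ i : {i : V // E i j}, Fin (t i.1) → Fin 2) →
      (Fin (t j) → Fin 2)),
    ∀ (x : ∀ j : V, Fin (t j) → Fin 2) (j : V),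
      ψ j (φ x) (fun i => x i.1) = x j

/-- The broadcast rate `β = inf { r/t : a (t, r) index code exists }`. -/
noncomputable def broadcastRate {V : Type*} (E : V → V → Prop) : ℝ :=
  sInf {ρ : ℝ | ∃ (t r : ℕ), 1 ≤ t ∧ HasCode E (fun _ => t) r ∧ ρ = (r : ℝ) / t}

end IC

namespace IC

/-- The generalized lexicographic product `G ∘ (F_1, …, F_m)`: vertex `i` of `G`
(on `[m]`, 0-indexed) is replaced by the graph `F i` (on `Vf i`), edges inside
each copy are those of `F i`, and there is an edge from every vertex of the
`i`-th copy to every vertex of the `j`-th copy (`i ≠ j`) iff `(i, j) ∈ E(G)`. -/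
def glexProd (m : ℕ) (GE : Fin m → Fin m → Prop)
    (Vf : ℕ → Type) (FE : ∀ i : ℕ, Vf i → Vf i → Prop) :
    (Σ i : Fin m, Vf i.val) → (Σ i : Fin m, Vf i.val) → Prop :=
  fun x y => (x.1 ≠ y.1 ∧ GE x.1 y.1) ∨
    ∃ h : x.1 = y.1,
      FE x.1.val x.2 (cast (congrArg (fun i : Fin m => Vf i.val) h.symm) y.2)

end IC

namespace IC

variable {V : Type*} {E : V → V → Prop}

theorem HasCode.congr_t {t t' : V → ℕ} {r : ℕ}
    (h : HasCode E t r) (ht : ∀ j, t j = t' j) : HasCode E t' r := by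
  have : t = t' := funext ht
  subst this; exact h

theorem HasCode.mono_r {t : V → ℕ} {r r' : ℕ} (h : HasCode E t r) (hr : r ≤ r') :
    HasCode E t r' := by
  obtain ⟨φ, ψ, hc⟩ := h
  refine ⟨fun x k => if hk : (k : ℕ) < r then φ x ⟨k, hk⟩ else 0,
    fun j c s => ψ j (fun k => c ⟨k, lt_of_lt_of_le k.2 hr⟩) s, fun x j => ?_⟩
  dsimp only
  have : (fun k : Fin r => if hk : ((⟨(k : ℕ), lt_of_lt_of_le k.2 hr⟩ : Fin r') : ℕ) < r
      then φ x ⟨((⟨(k : ℕ), lt_of_lt_of_le k.2 hr⟩ : Fin r') : ℕ), hk⟩ else 0) = φ x := by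
    funext k; simp
  rw [this]; exact hc x j

theorem HasCode.anti_t {t t' : V → ℕ} {r : ℕ} (h : HasCode E t r)
    (ht : ∀ j, t' j ≤ t j) : HasCode E t' r := by
  obtain ⟨φ, ψ, hc⟩ := h
  let ext : (∀ j : V, Fin (t' j) → Fin 2) → (∀ j : V, Fin (t j) → Fin 2) :=
    fun x j k => if hk : (k : ℕ) < t' j then x j ⟨k, hk⟩ else 0
  refine ⟨fun x => φ (ext x),
    fun j c s => fun k => ψ j c
      (fun i k' => if hk : (k' : ℕ) < t' i.1 then s i ⟨k', hk⟩ else 0)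
      ⟨k, lt_of_lt_of_le k.2 (ht j)⟩, fun x j => ?_⟩
  dsimp only
  funext k
  have h1 : (fun (i : {i : V // E i j}) (k' : Fin (t i.1)) =>
      if hk : (k' : ℕ) < t' i.1 then x i.1 ⟨(k' : ℕ), hk⟩ else 0)
      = (fun (i : {i : V // E i j}) => ext x i.1) := rfl
  rw [h1, hc (ext x) j]
  simp only [ext, k.2, dif_pos]

theorem HasCode.add {t₁ t₂ : V → ℕ} {r₁ r₂ : ℕ} (h₁ : HasCode E t₁ r₁)
    (h₂ : HasCode E t₂ r₂) : HasCode E (fun j => t₁ j + t₂ j) (r₁ + r₂) := by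
  obtain ⟨φ₁, ψ₁, hc₁⟩ := h₁
  obtain ⟨φ₂, ψ₂, hc₂⟩ := h₂
  let L : (∀ j : V, Fin (t₁ j + t₂ j) → Fin 2) → (∀ j : V, Fin (t₁ j) → Fin 2) :=
    fun x j k => x j (Fin.castAdd _ k)
  let R : (∀ j : V, Fin (t₁ j + t₂ j) → Fin 2) → (∀ j : V, Fin (t₂ j) → Fin 2) :=
    fun x j k => x j (Fin.natAdd _ k)
  refine ⟨fun x => Fin.append (φ₁ (L x)) (φ₂ (R x)),
    fun j c s => Fin.append
      (ψ₁ j (fun k => c (Fin.castAdd _ k)) (fun i k => s i (Fin.castAdd _ k)))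
      (ψ₂ j (fun k => c (Fin.natAdd _ k)) (fun i k => s i (Fin.natAdd _ k))),
    fun x j => ?_⟩
  dsimp only
  have e1 : (fun k => Fin.append (φ₁ (L x)) (φ₂ (R x)) (Fin.castAdd r₂ k)) = φ₁ (L x) := by
    funext k; exact Fin.append_left _ _ k
  have e2 : (fun k => Fin.append (φ₁ (L x)) (φ₂ (R x)) (Fin.natAdd r₁ k)) = φ₂ (R x) := by
    funext k; exact Fin.append_right _ _ k
  rw [e1, e2]
  have e3 : (fun (i : {i : V // E i j}) (k : Fin (t₁ i.1)) => x i.1 (Fin.castAdd _ k))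
      = fun (i : {i : V // E i j}) => L x i.1 := rfl
  have e4 : (fun (i : {i : V // E i j}) (k : Fin (t₂ i.1)) => x i.1 (Fin.natAdd _ k))
      = fun (i : {i : V // E i j}) => R x i.1 := rfl
  rw [e3, e4, hc₁ (L x) j, hc₂ (R x) j]
  funext k
  induction k using Fin.addCases with
  | left k => simp [L, Fin.append_left]
  | right k => simp [R, Fin.append_right]

theorem hasCode_zero : HasCode E (fun _ => 0) 0 :=
  ⟨fun _ => Fin.elim0, fun _ _ _ k => k.elim0, fun x j => funext fun k => k.elim0⟩

theorem hasCode_sum {ι : Type*} [DecidableEq ι] (s : Finset ι) (t : ι → V → ℕ) (q : ι → ℕ)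
    (h : ∀ i ∈ s, HasCode E (t i) (q i)) :
    HasCode E (fun j => ∑ i ∈ s, t i j) (∑ i ∈ s, q i) := by
  classical
  induction s using Finset.induction_on with
  | empty => simpa using (hasCode_zero (E := E))
  | @insert a s' ha ih =>
    have := (h a (Finset.mem_insert_self a s')).add
      (ih fun i hi' => h i (Finset.mem_insert_of_mem hi'))
    rw [Finset.sum_insert ha]
    exact this.congr_t fun j => by rw [Finset.sum_insert ha]

theorem HasCode.smul {t : V → ℕ} {r : ℕ} (h : HasCode E t r) (k : ℕ) :
    HasCode E (fun j => k * t j) (k * r) := by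
  have := hasCode_sum (E := E) (Finset.range k) (fun _ => t) (fun _ => r) (fun _ _ => h)
  simp only [Finset.sum_const, Finset.card_range, smul_eq_mul] at this
  exact this

theorem hasCode_trivial [Fintype V] (d : ℕ) :
    HasCode E (fun _ => d) (Fintype.card V * d) := by
  let eV : V ≃ Fin (Fintype.card V) := Fintype.equivFin V
  refine ⟨fun x k => x (eV.symm (finProdFinEquiv.symm k).1) (finProdFinEquiv.symm k).2,
    fun j c _ => fun a => c (finProdFinEquiv (eV j, a)), fun x j => ?_⟩
  funext a
  show x (eV.symm (finProdFinEquiv.symm (finProdFinEquiv (eV j, a))).1)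
      (finProdFinEquiv.symm (finProdFinEquiv (eV j, a))).2 = x j a
  rw [Equiv.symm_apply_apply, Equiv.symm_apply_apply]

theorem hasCode_subtype_lift (P : V → Prop) [DecidablePred P] {d q : ℕ}
    (h : HasCode (fun a b : Subtype P => E a.1 b.1) (fun _ => d) q) :
    HasCode E (fun j => if P j then d else 0) q := by
  obtain ⟨φ, ψ, hc⟩ := h
  let restr : (∀ j : V, Fin (if P j then d else 0) → Fin 2) →
      (∀ j : Subtype P, Fin d → Fin 2) :=
    fun x j k => x j.1 (Fin.cast (if_pos j.2).symm k)
  refine ⟨fun x => φ (restr x),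
    fun j c s => if hj : P j then
      (fun k => ψ ⟨j, hj⟩ c
        (fun i k' => s ⟨i.1.1, i.2⟩ (Fin.cast (if_pos i.1.2).symm k'))
        (Fin.cast (if_pos hj) k))
    else (fun _ => 0), fun x j => ?_⟩
  dsimp only
  by_cases hj : P j
  · rw [dif_pos hj]
    funext k
    have h2 := congrFun (hc (restr x) ⟨j, hj⟩) (Fin.cast (if_pos hj) k)
    exact h2.trans (congrArg (x j) (Fin.ext rfl))
  · rw [dif_neg hj]
    funext k
    exact absurd k.isLt (by simp [hj])

theorem rateSet_bddBelow :
    BddBelow {ρ : ℝ | ∃ (t r : ℕ), 1 ≤ t ∧ HasCode E (fun _ => t) r ∧ ρ = (r : ℝ) / t} := by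
  refine ⟨0, fun ρ hρ => ?_⟩
  obtain ⟨t, r, ht, hc, rfl⟩ := hρ
  positivity

theorem broadcastRate_nonneg : 0 ≤ broadcastRate E := by
  apply Real.sInf_nonneg
  rintro ρ ⟨t, r, ht, hc, rfl⟩
  positivity

theorem broadcastRate_le {t r : ℕ} (ht : 1 ≤ t) (hc : HasCode E (fun _ => t) r) :
    broadcastRate E ≤ (r : ℝ) / t :=
  csInf_le rateSet_bddBelow ⟨t, r, ht, hc, rfl⟩

theorem exists_near [Fintype V] (E : V → V → Prop) {ε : ℝ} (hε : 0 < ε) :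
    ∃ t r : ℕ, 1 ≤ t ∧ HasCode E (fun _ => t) r ∧
      (r : ℝ) / t < broadcastRate E + ε := by
  have hne : {ρ : ℝ | ∃ (t r : ℕ), 1 ≤ t ∧ HasCode E (fun _ => t) r ∧
      ρ = (r : ℝ) / t}.Nonempty :=
    ⟨(Fintype.card V * 1 : ℕ) / (1 : ℕ), 1, Fintype.card V * 1, le_refl 1,
      hasCode_trivial 1, rfl⟩
  obtain ⟨a, ⟨t, r, ht, hc, rfl⟩, ha⟩ := Real.lt_sInf_add_pos hne hε
  exact ⟨t, r, ht, hc, ha⟩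

/-- Block up a `(s,q)` code to message length `d`. -/
theorem hasCode_blocks {s q : ℕ} (hs : 1 ≤ s) (h : HasCode E (fun _ => s) q) (d : ℕ) :
    HasCode E (fun _ => d) ((d / s + 1) * q) := by
  have hsm : HasCode E (fun _ => (d / s + 1) * s) ((d / s + 1) * q) := h.smul (d / s + 1)
  apply hsm.anti_t
  intro j
  have h1 : d % s < s := Nat.mod_lt d hs
  have h2 := Nat.div_add_mod d s
  nlinarith [Nat.div_mul_le_self d s]

theorem hasCode_glexProd (m : ℕ) (GE : Fin m → Fin m → Prop) (hG : ∀ i, ¬ GE i i)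
    (Vf : ℕ → Type) (FE : ∀ i : ℕ, Vf i → Vf i → Prop)
    (t : ℕ) (r : Fin m → ℕ) (R : ℕ)
    (hin : ∀ i : Fin m, HasCode (FE i.val) (fun _ => t) (r i))
    (hout : HasCode GE r R) :
    HasCode (glexProd m GE Vf FE) (fun _ => t) R := by
  have hneq : ∀ {a b : Fin m}, GE a b → (a : Fin m) ≠ b := by
    intro a b hab he; subst he; exact hG a hab
  choose φin ψin hcin using hin
  obtain ⟨Φ, Ψ, hcout⟩ := hout
  refine ⟨fun x => Φ (fun i => φin i (fun v => x ⟨i, v⟩)),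
    fun p c s =>
      ψin p.1 p.2
        (Ψ p.1 c (fun i => φin i.1 (fun v => s ⟨⟨i.1, v⟩,
          Or.inl ⟨hneq i.2, i.2⟩⟩)))
        (fun v => s ⟨⟨p.1, v.1⟩, Or.inr ⟨rfl, v.2⟩⟩),
    fun x p => ?_⟩
  obtain ⟨j, w⟩ := p
  dsimp only
  set y : ∀ i : Fin m, Fin (r i) → Fin 2 := fun i => φin i (fun v => x ⟨i, v⟩) with hy
  show ψin j w (Ψ j (Φ y) (fun i : {i : Fin m // GE i j} => y i.1))
      (fun v => x ⟨j, v.1⟩) = x ⟨j, w⟩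
  rw [hcout y j]
  exact hcin j (fun v => x ⟨j, v⟩) w

/-- Layered construction of a non-uniform outer code. -/
theorem hasCode_layered (m : ℕ) (GE : Fin m → Fin m → Prop)
    (f : ℕ → ℕ) (hf : Monotone f) (Q : ℕ → ℕ)
    (h0 : HasCode GE (fun _ => f 0) (Q 0))
    (hstep : ∀ i, i < m - 1 → HasCode
      (fun a b : {j : Fin m // i < (j : ℕ)} => GE a.1 b.1)
      (fun _ => f (i + 1) - f i) (Q (i + 1))) :
    HasCode GE (fun j : Fin m => f (j : ℕ))
      (Q 0 + ∑ i ∈ Finset.range (m - 1), Q (i + 1)) := by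
  have hlift : ∀ i ∈ Finset.range (m - 1), HasCode GE
      (fun j : Fin m => if i < (j : ℕ) then f (i + 1) - f i else 0) (Q (i + 1)) := by
    intro i hi
    exact hasCode_subtype_lift (fun j : Fin m => i < (j : ℕ))
      (hstep i (Finset.mem_range.mp hi))
  have hsum := hasCode_sum (E := GE) (Finset.range (m - 1))
    (fun i (j : Fin m) => if i < (j : ℕ) then f (i + 1) - f i else 0)
    (fun i => Q (i + 1)) hlift
  refine (h0.add hsum).congr_t fun j => ?_
  have hjm : (j : ℕ) ≤ m - 1 := by omega
  have hsub : Finset.range (j : ℕ) ⊆ Finset.range (m - 1) :=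
    Finset.range_subset_range.mpr hjm
  have e1 : ∑ i ∈ Finset.range (m - 1),
      (if i < (j : ℕ) then f (i + 1) - f i else 0)
      = ∑ i ∈ Finset.range (j : ℕ), (f (i + 1) - f i) := by
    rw [← Finset.sum_subset hsub]
    · apply Finset.sum_congr rfl
      intro i hi
      rw [if_pos (Finset.mem_range.mp hi)]
    · intro i _ hi
      rw [if_neg (by simpa using hi)]
  rw [e1, Finset.sum_range_tsub hf]
  have := hf (Nat.zero_le (j : ℕ))
  omega

/-- Real arithmetic for one layer term. -/
theorem nat_term {K t s q Dn : ℕ} {Dr a b : ℝ} (hK : 1 ≤ K) (ht : 1 ≤ t) (hs : 1 ≤ s)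
    (hD : (Dn : ℝ) = K * Dr) (hDr : 0 ≤ Dr) (ha : Dr / t ≤ a) (hb : (q : ℝ) / s ≤ b) :
    (((Dn / s + 1) * q : ℕ) : ℝ) / ((K * t : ℕ) : ℝ) ≤ a * b + q / K := by
  have hKr : (0 : ℝ) < K := by exact_mod_cast hK
  have htr : (1 : ℝ) ≤ t := by exact_mod_cast ht
  have hsr : (0 : ℝ) < s := by exact_mod_cast hs
  have hqr : (0 : ℝ) ≤ q := Nat.cast_nonneg q
  have ha0 : 0 ≤ a := le_trans (by positivity) ha
  have hb0 : 0 ≤ b := le_trans (by positivity) hb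
  have hcast : ((Dn / s : ℕ) : ℝ) ≤ K * Dr / s := by
    calc ((Dn / s : ℕ) : ℝ) ≤ (Dn : ℝ) / s := Nat.cast_div_le
    _ = K * Dr / s := by rw [hD]
  have htr0 : (0:ℝ) < t := lt_of_lt_of_le one_pos htr
  have step1 : (((Dn / s + 1) * q : ℕ) : ℝ) / ((K * t : ℕ) : ℝ)
      ≤ (K * Dr / s + 1) * q / (K * t) := by
    push_cast
    gcongr
  refine step1.trans ?_
  have heq : (K * Dr / s + 1) * q / (K * t) = (Dr / t) * ((q : ℝ) / s) + q / (K * t) := by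
    field_simp
  rw [heq]
  have h1 : (Dr / t) * ((q : ℝ) / s) ≤ a * b :=
    mul_le_mul ha hb (by positivity) ha0
  have h2 : (q : ℝ) / (K * t) ≤ q / K :=
    div_le_div_of_nonneg_left hqr hKr (le_mul_of_one_le_right hKr.le htr)
  linarith

end IC

/-- Upper bound on the broadcast rate of a generalized
lexicographic product: if `β(F_1) ≤ ⋯ ≤ β(F_m)` (here 0-indexed: `F 0, …,
F (m−1)`), then `β(G ∘ (F_1, …, F_m)) ≤ β(F_1)β(G) +
Σ_{i=1}^{m−1} (β(F_{i+1}) − β(F_i)) β(G|_{{i+1,…,m}})`. -/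
theorem broadcastRate_glexProd_le
    (m : ℕ) (hm : 1 ≤ m)
    (GE : Fin m → Fin m → Prop) (hG : ∀ i, ¬ GE i i)
    (Vf : ℕ → Type) [∀ i, Fintype (Vf i)] [∀ i, Nonempty (Vf i)]
    (FE : ∀ i : ℕ, Vf i → Vf i → Prop) (hF : ∀ i v, ¬ FE i v v)
    (hmono : ∀ i j : ℕ, i ≤ j → j < m →
      IC.broadcastRate (FE i) ≤ IC.broadcastRate (FE j)) :
    IC.broadcastRate (IC.glexProd m GE Vf FE) ≤
      IC.broadcastRate (FE 0) * IC.broadcastRate GE +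
      ∑ i ∈ Finset.range (m - 1),
        (IC.broadcastRate (FE (i + 1)) - IC.broadcastRate (FE i)) *
          IC.broadcastRate (fun a b : {j : Fin m // i < (j : ℕ)} => GE a.1 b.1) := by
  classical
  set βF : ℕ → ℝ := fun i => IC.broadcastRate (FE i) with hβF
  set βG : ℝ := IC.broadcastRate GE with hβG
  set βH : ℕ → ℝ := fun i =>
    IC.broadcastRate (fun a b : {j : Fin m // i < (j : ℕ)} => GE a.1 b.1) with hβH
  set g : ℝ → ℝ := fun ε => (βF 0 + ε) * (βG + ε) +
    ∑ i ∈ Finset.range (m - 1), ((βF (i + 1) - βF i) + 2 * ε) * (βH i + ε) with hg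
  have stepA : ∀ ε : ℝ, 0 < ε →
      IC.broadcastRate (IC.glexProd m GE Vf FE) ≤ g ε := by
    intro ε hε
    -- inner codes
    choose tF rF htF hcF hrF using fun i : ℕ => IC.exists_near (FE i) hε
    set t : ℕ := ∏ i ∈ Finset.range m, tF i with hts
    have ht : 1 ≤ t := Finset.one_le_prod' fun i _ => htF i
    have hdvd : ∀ i < m, tF i ∣ t := fun i hi =>
      Finset.dvd_prod_of_mem tF (Finset.mem_range.mpr hi)
    set ri : ℕ → ℕ := fun i => (t / tF i) * rF i with hri_def
    have hri : ∀ i, i < m → IC.HasCode (FE i) (fun _ => t) (ri i) := by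
      intro i hi
      exact ((hcF i).smul (t / tF i)).congr_t fun _ => Nat.div_mul_cancel (hdvd i hi)
    have hri_rate : ∀ i, i < m → (ri i : ℝ) / t < βF i + ε := by
      intro i hi
      have hk : 1 ≤ t / tF i := Nat.one_le_div_iff (htF i) |>.mpr (Nat.le_of_dvd ht (hdvd i hi))
      have hkr : (0 : ℝ) < (t / tF i : ℕ) := by exact_mod_cast hk
      have htc : (t : ℝ) = (t / tF i : ℕ) * (tF i) := by
        exact_mod_cast (Nat.div_mul_cancel (hdvd i hi)).symm
      rw [hri_def]
      push_cast
      rw [htc, mul_div_mul_left _ _ (ne_of_gt hkr)]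
      exact hrF i
    -- monotone envelope
    set f : ℕ → ℕ := fun i => Finset.sup (Finset.range (min (i + 1) m)) ri with hfd
    have hfmono : Monotone f := by
      intro a b hab
      apply Finset.sup_mono
      apply Finset.range_subset_range.mpr
      omega
    have hf_code : ∀ i, i < m → IC.HasCode (FE i) (fun _ => t) (f i) := by
      intro i hi
      refine (hri i hi).mono_r ?_
      apply Finset.le_sup
      simp only [Finset.mem_range]
      omega
    have hf_hi : ∀ i, i < m → (f i : ℝ) / t < βF i + ε := by
      intro i hi
      obtain ⟨j, hjmem, hjeq⟩ := Finset.exists_mem_eq_sup (Finset.range (min (i + 1) m))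
        (by simp; omega) ri
      rw [hfd]
      simp only
      rw [hjeq]
      have hj2 : j ≤ i ∧ j < m := by
        simp only [Finset.mem_range] at hjmem; omega
      exact lt_of_lt_of_le (hri_rate j hj2.2)
        (by have := hmono j i hj2.1 hi; simp only [hβF] at this ⊢; linarith)
    have hf_lo : ∀ i, i < m → βF i ≤ (f i : ℝ) / t := fun i hi =>
      IC.broadcastRate_le ht (hf_code i hi)
    -- outer codes
    obtain ⟨s0, q0, hs0, hc0, hq0⟩ := IC.exists_near GE hε
    choose sH qH hsH hcH hqH using fun i : ℕ =>
      IC.exists_near (fun a b : {j : Fin m // i < (j : ℕ)} => GE a.1 b.1) hε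
    set C : ℝ := q0 + ∑ i ∈ Finset.range (m - 1), (qH i : ℝ) with hC
    have key : ∀ K : ℕ, 1 ≤ K →
        IC.broadcastRate (IC.glexProd m GE Vf FE) ≤ g ε + C / K := by
      intro K hK
      set Q : ℕ → ℕ := fun n => if n = 0 then ((K * f 0) / s0 + 1) * q0
        else ((K * f n - K * f (n - 1)) / sH (n - 1) + 1) * qH (n - 1) with hQ
      have hlay : IC.HasCode GE (fun j : Fin m => K * f (j : ℕ))
          (Q 0 + ∑ i ∈ Finset.range (m - 1), Q (i + 1)) := by
        refine IC.hasCode_layered m GE (fun i => K * f i)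
          (fun a b hab => Nat.mul_le_mul_left K (hfmono hab)) Q ?_ ?_
        · simpa [hQ] using IC.hasCode_blocks hs0 hc0 (K * f 0)
        · intro i hi
          simpa [hQ] using IC.hasCode_blocks (hsH i) (hcH i) (K * f (i + 1) - K * f i)
      have hglex : IC.HasCode (IC.glexProd m GE Vf FE) (fun _ => K * t)
          (Q 0 + ∑ i ∈ Finset.range (m - 1), Q (i + 1)) := by
        refine IC.hasCode_glexProd m GE hG Vf FE (K * t)
          (fun j : Fin m => K * f (j : ℕ)) _ ?_ hlay
        intro i
        exact (hf_code i.1 i.2).smul K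
      have hKt : 1 ≤ K * t := Nat.one_le_iff_ne_zero.mpr (by positivity)
      have hrate := IC.broadcastRate_le hKt hglex
      refine hrate.trans ?_
      -- arithmetic
      have hsplit : ((Q 0 + ∑ i ∈ Finset.range (m - 1), Q (i + 1) : ℕ) : ℝ) / ((K * t : ℕ) : ℝ)
          = (Q 0 : ℝ) / ((K * t : ℕ) : ℝ)
            + ∑ i ∈ Finset.range (m - 1), (Q (i + 1) : ℝ) / ((K * t : ℕ) : ℝ) := by
        push_cast
        rw [add_div, Finset.sum_div]
      rw [hsplit]
      have hterm0 : (Q 0 : ℝ) / ((K * t : ℕ) : ℝ) ≤ (βF 0 + ε) * (βG + ε) + q0 / K := by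
        have : (Q 0 : ℕ) = ((K * f 0) / s0 + 1) * q0 := by simp [hQ]
        rw [this]
        exact IC.nat_term (Dr := (f 0 : ℝ)) hK ht hs0 (by push_cast; ring)
          (by positivity) (hf_hi 0 hm).le hq0.le
      have hterms : ∀ i ∈ Finset.range (m - 1),
          (Q (i + 1) : ℝ) / ((K * t : ℕ) : ℝ)
          ≤ ((βF (i + 1) - βF i) + 2 * ε) * (βH i + ε) + qH i / K := by
        intro i hi
        have him : i < m - 1 := Finset.mem_range.mp hi
        have hi1 : i + 1 < m := by omega
        have hi0 : i < m := by omega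
        have : (Q (i + 1) : ℕ)
            = ((K * f (i + 1) - K * f i) / sH i + 1) * qH i := by simp [hQ]
        rw [this]
        have hfle : f i ≤ f (i + 1) := hfmono (Nat.le_succ i)
        refine IC.nat_term hK ht (hsH i) (Dr := (f (i + 1) : ℝ) - f i) ?_ ?_ ?_ (hqH i).le
        · have : (K * f (i + 1) - K * f i : ℕ) = K * (f (i + 1) - f i) := by
            rw [Nat.mul_sub]
          rw [this]
          push_cast [hfle]
          ring
        · have : (f i : ℝ) ≤ f (i + 1) := by exact_mod_cast hfle
          linarith
        · have e : ((f (i + 1) : ℝ) - f i) / t = (f (i + 1) : ℝ) / t - (f i : ℝ) / t := by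
            ring
          rw [e]
          have h1 := hf_hi (i + 1) hi1
          have h2 := hf_lo i hi0
          linarith
      calc (Q 0 : ℝ) / ((K * t : ℕ) : ℝ)
            + ∑ i ∈ Finset.range (m - 1), (Q (i + 1) : ℝ) / ((K * t : ℕ) : ℝ)
          ≤ ((βF 0 + ε) * (βG + ε) + q0 / K)
            + ∑ i ∈ Finset.range (m - 1),
              (((βF (i + 1) - βF i) + 2 * ε) * (βH i + ε) + qH i / K) := by
            exact add_le_add hterm0 (Finset.sum_le_sum hterms)
        _ = g ε + C / K := by
            simp only [hg, hC]
            rw [Finset.sum_add_distrib, add_div, Finset.sum_div]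
            ring
    -- K → ∞
    have htd : Filter.Tendsto (fun K : ℕ => g ε + C / K) Filter.atTop (nhds (g ε + 0)) :=
      Filter.Tendsto.add tendsto_const_nhds (tendsto_const_div_atTop_nhds_zero_nat C)
    rw [add_zero] at htd
    refine ge_of_tendsto htd ?_
    filter_upwards [Filter.eventually_ge_atTop 1] with K hK
    exact key K hK
  -- ε → 0
  have hgc : Continuous g := by
    apply Continuous.add
    · exact (continuous_const.add continuous_id).mul (continuous_const.add continuous_id)
    · apply continuous_finset_sum
      intro i _
      exact (continuous_const.add (continuous_const.mul continuous_id)).mul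
        (continuous_const.add continuous_id)
  have htd0 : Filter.Tendsto g (nhdsWithin 0 (Set.Ioi 0)) (nhds (g 0)) :=
    (hgc.tendsto 0).mono_left nhdsWithin_le_nhds
  have hfin : IC.broadcastRate (IC.glexProd m GE Vf FE) ≤ g 0 := by
    refine ge_of_tendsto htd0 ?_
    refine eventually_nhdsWithin_of_forall ?_
    intro ε hε
    exact stepA ε hε
  refine hfin.trans_eq ?_
  rw [hg]
  norm_num
  rfl
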